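/- Every incoherent forecast is strongly dominated by a coherent one (bounded case): let s be a bounded proper scoring rule and f ∈ [0,1]^n a forecast that is not coherent (f ∉ conv(V)). Then there exists a coherent forecast g ∈ conv(V) such that P_s(ω,g) < P_s(ω,f) for every ω ∈ Ω. Moreover g can be taken to be the Bregman projection of f onto conv(V) with respect to Φ(x) = Σ_i φ(x_i). -/

import Mathlib

open Set Filter Topology

section AuxiliaryLemmas

lemma aux_derivWithin (φ φ' : ℝ → ℝ) (hφcont : ContinuousOn φ (Icc 0 1))
    (hφderiv : ∀ x ∈ Ioo (0:ℝ) 1, HasDerivAt φ (φ' x) x)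
    (hφ'cont : ContinuousOn φ' (Icc 0 1)) :
    ∀ x ∈ Icc (0:ℝ) 1, HasDerivWithinAt φ (φ' x) (Icc 0 1) x := by
  have hdiff : DifferentiableOn ℝ φ (Ioo 0 1) := fun x hx =>
    ((hφderiv x hx).differentiableAt).differentiableWithinAt
  have hderiv_eq : ∀ x ∈ Ioo (0:ℝ) 1, deriv φ x = φ' x := fun x hx => (hφderiv x hx).deriv
  intro x hx
  rcases eq_or_lt_of_le hx.1 with rfl | h0
  · -- x = 0
    have h01 : (0:ℝ) < 1 := one_pos
    have key : HasDerivWithinAt φ (φ' 0) (Ici 0) 0 := by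
      apply hasDerivWithinAt_Ici_of_tendsto_deriv hdiff
        ((hφcont 0 (by simp)).mono Ioo_subset_Icc_self)
        (Ioo_mem_nhdsGT_of_mem (by simp : (0:ℝ) ∈ Ico (0:ℝ) 1))
      have heq : 𝓝[>] (0:ℝ) = 𝓝[Ioo (0:ℝ) 1] 0 := by
        rw [nhdsWithin_restrict'' (Ioi (0:ℝ))
          (Ioo_mem_nhdsGT_of_mem (by simp : (0:ℝ) ∈ Ico (0:ℝ) 1))]
        congr 1
        rw [inter_eq_right.2 Ioo_subset_Ioi_self]
      rw [heq]
      have h1 : Tendsto φ' (𝓝[Ioo (0:ℝ) 1] 0) (𝓝 (φ' 0)) :=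
        ((hφ'cont 0 (by simp)).mono Ioo_subset_Icc_self)
      refine Tendsto.congr' ?_ h1
      exact Filter.eventually_of_mem self_mem_nhdsWithin fun y hy => (hderiv_eq y hy).symm
    exact key.mono Icc_subset_Ici_self
  rcases eq_or_lt_of_le hx.2 with rfl | h1
  · -- x = 1
    have key : HasDerivWithinAt φ (φ' 1) (Iic 1) 1 := by
      apply hasDerivWithinAt_Iic_of_tendsto_deriv hdiff
        ((hφcont 1 (by simp)).mono Ioo_subset_Icc_self)
        (Ioo_mem_nhdsLT_of_mem (by simp : (1:ℝ) ∈ Ioc (0:ℝ) 1))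
      have heq : 𝓝[<] (1:ℝ) = 𝓝[Ioo (0:ℝ) 1] 1 := by
        rw [nhdsWithin_restrict'' (Iio (1:ℝ))
          (Ioo_mem_nhdsLT_of_mem (by simp : (1:ℝ) ∈ Ioc (0:ℝ) 1))]
        congr 1
        rw [inter_eq_right.2 Ioo_subset_Iio_self]
      rw [heq]
      have h1 : Tendsto φ' (𝓝[Ioo (0:ℝ) 1] 1) (𝓝 (φ' 1)) :=
        ((hφ'cont 1 (by simp)).mono Ioo_subset_Icc_self)
      refine Tendsto.congr' ?_ h1
      exact Filter.eventually_of_mem self_mem_nhdsWithin fun y hy => (hderiv_eq y hy).symm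
    exact key.mono Icc_subset_Iic_self
  · exact (hφderiv x ⟨h0, h1⟩).hasDerivWithinAt


lemma aux_ext (F G : ℝ → ℝ) (hF : ContinuousOn F (Icc 0 1)) (hG : ContinuousOn G (Icc 0 1))
    (h : ∀ x ∈ Ioo (0:ℝ) 1, F x = G x) : ∀ x ∈ Icc (0:ℝ) 1, F x = G x := by
  intro x hx
  have hxcl : x ∈ closure (Ioo (0:ℝ) 1) := by
    rw [closure_Ioo (by norm_num : (0:ℝ) ≠ 1)]; exact hx
  have hne : (𝓝[Ioo (0:ℝ) 1] x).NeBot := mem_closure_iff_nhdsWithin_neBot.1 hxcl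
  have hFt : Tendsto F (𝓝[Ioo (0:ℝ) 1] x) (𝓝 (F x)) := (hF x hx).mono Ioo_subset_Icc_self
  have hGt : Tendsto G (𝓝[Ioo (0:ℝ) 1] x) (𝓝 (G x)) := (hG x hx).mono Ioo_subset_Icc_self
  have hFt' : Tendsto F (𝓝[Ioo (0:ℝ) 1] x) (𝓝 (G x)) :=
    hGt.congr' (Filter.eventually_of_mem self_mem_nhdsWithin fun y hy => (h y hy).symm)
  exact tendsto_nhds_unique hFt hFt'

lemma aux_breg (φ φ' : ℝ → ℝ) (hconv : StrictConvexOn ℝ (Icc 0 1) φ)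
    (hd : ∀ x ∈ Icc (0:ℝ) 1, HasDerivWithinAt φ (φ' x) (Icc 0 1) x) :
    ∀ a ∈ Icc (0:ℝ) 1, ∀ b ∈ Icc (0:ℝ) 1, a ≠ b → 0 < φ a - φ b - φ' b * (a - b) := by
  intro a ha b hb hab
  rcases lt_or_gt_of_ne hab with h | h
  · -- a < b : slope φ a b < φ' b
    have := hconv.slope_lt_of_hasDerivWithinAt ha hb h (hd b hb)
    rw [slope_def_field] at this
    have hba : (0:ℝ) < b - a := by linarith
    rw [div_lt_iff₀ hba] at this
    nlinarith
  · have := hconv.lt_slope_of_hasDerivWithinAt hb ha h (hd b hb)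
    rw [slope_def_field] at this
    have hba : (0:ℝ) < a - b := by linarith
    rw [lt_div_iff₀ hba] at this
    nlinarith

end AuxiliaryLemmas

/-- Every incoherent forecast is strongly dominated by a coherent one
(bounded case): if `s` is a bounded proper scoring rule with Savage
representation via `φ`, and the forecast `f ∈ [0,1]^n` is not in the convex
hull of the truth-value vectors, then the Bregman projection `g` of `f` onto
that hull is coherent and strictly beats `f` in every state. -/
theorem stmt_18 {Ω : Type*} [Nonempty Ω] {n : ℕ} (E : Fin n → Set Ω)
    (s : ℝ → ℝ → ℝ) (φ φ' : ℝ → ℝ)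
    (hproper : ∀ p ∈ Icc (0:ℝ) 1, ∀ x ∈ Icc (0:ℝ) 1, x ≠ p →
      p * s 1 p + (1 - p) * s 0 p < p * s 1 x + (1 - p) * s 0 x)
    (hcont : ∀ i ∈ ({0, 1} : Set ℝ), ContinuousOn (s i) (Icc (0:ℝ) 1))
    (hnonneg : ∀ i ∈ ({0, 1} : Set ℝ), ∀ x ∈ Icc (0:ℝ) 1, 0 ≤ s i x)
    (hbdd : ∃ M : ℝ, ∀ i ∈ ({0, 1} : Set ℝ), ∀ x ∈ Icc (0:ℝ) 1, |s i x| ≤ M)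
    (hφ : ∀ x ∈ Icc (0:ℝ) 1, φ x = -(x * s 1 x) - (1 - x) * s 0 x)
    (hφconv : StrictConvexOn ℝ (Icc (0:ℝ) 1) φ)
    (hφderiv : ∀ x ∈ Ioo (0:ℝ) 1, HasDerivAt φ (φ' x) x)
    (hφ'cont : ContinuousOn φ' (Icc (0:ℝ) 1))
    (hsav : ∀ x ∈ Ioo (0:ℝ) 1, ∀ i ∈ ({0, 1} : Set ℝ),
      s i x = -φ x - φ' x * (i - x))
    (f : Fin n → ℝ) (hfc : ∀ i, f i ∈ Icc (0:ℝ) 1)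
    (hfinc : f ∉ convexHull ℝ
      {v : Fin n → ℝ | ∃ ω : Ω, v = fun i => (E i).indicator (fun _ => (1:ℝ)) ω}) :
    ∃ g ∈ convexHull ℝ
      {v : Fin n → ℝ | ∃ ω : Ω, v = fun i => (E i).indicator (fun _ => (1:ℝ)) ω},
      (∀ y ∈ convexHull ℝ
        {v : Fin n → ℝ | ∃ ω : Ω, v = fun i => (E i).indicator (fun _ => (1:ℝ)) ω},
        (∑ i, (φ (g i) - φ (f i) - φ' (f i) * (g i - f i))) ≤
        (∑ i, (φ (y i) - φ (f i) - φ' (f i) * (y i - f i)))) ∧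
      ∀ ω : Ω,
        (∑ i, s ((E i).indicator (fun _ => (1:ℝ)) ω) (g i)) <
        (∑ i, s ((E i).indicator (fun _ => (1:ℝ)) ω) (f i)) := by
  classical
  -- continuity of φ on Icc
  have φcont : ContinuousOn φ (Icc (0:ℝ) 1) := by
    have hFc : ContinuousOn (fun x : ℝ => -(x * s 1 x) - (1 - x) * s 0 x) (Icc (0:ℝ) 1) :=
      ((continuousOn_id.mul (hcont 1 (by simp))).neg).sub
        ((continuousOn_const.sub continuousOn_id).mul (hcont 0 (by simp)))
    exact hFc.congr hφ
  -- derivative within Icc everywhere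
  have hd : ∀ x ∈ Icc (0:ℝ) 1, HasDerivWithinAt φ (φ' x) (Icc 0 1) x :=
    aux_derivWithin φ φ' φcont hφderiv hφ'cont
  -- Savage representation on all of Icc
  have hsIcc : ∀ i ∈ ({0, 1} : Set ℝ), ∀ x ∈ Icc (0:ℝ) 1, s i x = -φ x - φ' x * (i - x) := by
    intro i hi
    refine aux_ext (s i) (fun x => -φ x - φ' x * (i - x)) (hcont i hi)
      (φcont.neg.sub (hφ'cont.mul (continuousOn_const.sub continuousOn_id)))
      (fun x hx => hsav x hx i hi)
  -- Bregman positivity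
  have hbreg : ∀ a ∈ Icc (0:ℝ) 1, ∀ b ∈ Icc (0:ℝ) 1, a ≠ b →
      0 < φ a - φ b - φ' b * (a - b) := aux_breg φ φ' hφconv hd
  set V : Set (Fin n → ℝ) :=
    {v : Fin n → ℝ | ∃ ω : Ω, v = fun i => (E i).indicator (fun _ => (1:ℝ)) ω} with hV
  have hv01 : ∀ v ∈ V, ∀ i, v i ∈ ({0, 1} : Set ℝ) := by
    rintro v ⟨ω, rfl⟩ i
    by_cases h : ω ∈ E i <;> simp [Set.indicator_apply, h]
  have hVfin : V.Finite := by
    apply Set.Finite.subset (Set.Finite.pi (fun _ : Fin n => (Set.finite_singleton (1:ℝ)).insert 0))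
    intro v hv
    exact Set.mem_univ_pi.2 fun i => hv01 v hv i
  have hVK : V ⊆ convexHull ℝ V := subset_convexHull ℝ V
  have KC : IsCompact (convexHull ℝ V) := hVfin.isCompact_convexHull (𝕜 := ℝ)
  have Kne : (convexHull ℝ V).Nonempty := by
    obtain ⟨ω⟩ := ‹Nonempty Ω›
    exact ⟨_, hVK ⟨ω, rfl⟩⟩
  have hK01 : ∀ y ∈ convexHull ℝ V, ∀ i, y i ∈ Icc (0:ℝ) 1 := by
    intro y hy i
    have hsub : convexHull ℝ V ⊆ Set.pi univ (fun _ : Fin n => Icc (0:ℝ) 1) := by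
      apply convexHull_min
      · intro v hv
        refine Set.mem_univ_pi.2 fun j => ?_
        have hj := hv01 v hv j
        simp only [mem_insert_iff, mem_singleton_iff] at hj
        rcases hj with h | h <;> rw [h] <;> constructor <;> norm_num
      · exact convex_pi fun j _ => convex_Icc 0 1
    exact (hsub hy) i (mem_univ i)
  set D : (Fin n → ℝ) → ℝ :=
    fun y => ∑ i, (φ (y i) - φ (f i) - φ' (f i) * (y i - f i)) with hD
  have Dcont : ContinuousOn D (convexHull ℝ V) := by
    apply continuousOn_finset_sum
    intro i _
    refine ContinuousOn.sub (ContinuousOn.sub ?_ continuousOn_const)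
      (continuousOn_const.mul (((continuous_apply i).continuousOn).sub continuousOn_const))
    exact φcont.comp ((continuous_apply i).continuousOn) (fun y hy => hK01 y hy i)
  obtain ⟨g, hgK, hgmin⟩ := KC.exists_isMinOn Kne Dcont
  have hgmin' : ∀ y ∈ convexHull ℝ V, D g ≤ D y := fun y hy => hgmin hy
  have hg01 : ∀ i, g i ∈ Icc (0:ℝ) 1 := hK01 g hgK
  have hgf : ∃ i, g i ≠ f i := by
    by_contra h
    push_neg at h
    exact hfinc ((funext h : g = f) ▸ hgK)
  -- positivity of the Bregman divergence sum
  have hterm_nonneg : ∀ i, 0 ≤ φ (g i) - φ (f i) - φ' (f i) * (g i - f i) := by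
    intro i
    rcases eq_or_ne (g i) (f i) with h | h
    · rw [h]; ring_nf; exact le_refl 0
    · exact (hbreg (g i) (hg01 i) (f i) (hfc i) h).le
  have hBpos : 0 < D g := by
    rw [hD]
    obtain ⟨i0, hi0⟩ := hgf
    calc (0:ℝ) = ∑ _i : Fin n, (0:ℝ) := by simp
    _ < _ := by
      apply Finset.sum_lt_sum (fun i _ => hterm_nonneg i)
      exact ⟨i0, Finset.mem_univ i0, hbreg (g i0) (hg01 i0) (f i0) (hfc i0) hi0⟩
  refine ⟨g, hgK, hgmin', ?_⟩
  intro ω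
  set v : Fin n → ℝ := fun i => (E i).indicator (fun _ => (1:ℝ)) ω with hv
  have hvV : v ∈ V := ⟨ω, rfl⟩
  have hvK : v ∈ convexHull ℝ V := hVK hvV
  have hv01i : ∀ i, v i ∈ ({0, 1} : Set ℝ) := hv01 v hvV
  have hv01Icc : ∀ i, v i ∈ Icc (0:ℝ) 1 := fun i => by
    have hj := hv01i i
    simp only [mem_insert_iff, mem_singleton_iff] at hj
    rcases hj with h | h <;> rw [h] <;> constructor <;> norm_num
  -- first-order optimality
  have hL : 0 ≤ ∑ i, (φ' (g i) - φ' (f i)) * (v i - g i) := by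
    set h : ℝ → ℝ := fun t => D (fun i => g i + t * (v i - g i)) with hh
    have hmem : ∀ t ∈ Icc (0:ℝ) 1, ∀ i, g i + t * (v i - g i) ∈ Icc (0:ℝ) 1 := by
      intro t ht i
      have h2 : g i + t * (v i - g i) = (1 - t) * g i + t * v i := by ring
      rw [h2]
      have := (convex_Icc (0:ℝ) 1) (hg01 i) (hv01Icc i)
        (by linarith [ht.2] : (0:ℝ) ≤ 1 - t) ht.1 (by ring)
      simpa [smul_eq_mul] using this
    have hKmem : ∀ t ∈ Icc (0:ℝ) 1, (fun i => g i + t * (v i - g i)) ∈ convexHull ℝ V := by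
      intro t ht
      have := (convex_convexHull ℝ V) hgK hvK
        (by linarith [ht.2] : (0:ℝ) ≤ 1 - t) ht.1 (by ring)
      convert this using 1
      funext i
      simp [smul_eq_mul]
      ring
    have hmono : ∀ t ∈ Icc (0:ℝ) 1, h 0 ≤ h t := by
      intro t ht
      have h0 : h 0 = D g := by
        show D (fun i => g i + 0 * (v i - g i)) = D g
        congr 1; funext i; ring
      rw [h0]
      exact hgmin' _ (hKmem t ht)
    have hDeriv : HasDerivWithinAt h (∑ i, (φ' (g i) - φ' (f i)) * (v i - g i)) (Icc 0 1) 0 := by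
      have hsum : HasDerivWithinAt
          (fun t => ∑ i, (φ (g i + t * (v i - g i)) - φ (f i)
            - φ' (f i) * (g i + t * (v i - g i) - f i)))
          (∑ i, (φ' (g i) * (v i - g i) - φ' (f i) * (v i - g i))) (Icc 0 1) 0 := by
        apply HasDerivWithinAt.fun_sum
        intro i _
        have hc : HasDerivWithinAt (fun t : ℝ => g i + t * (v i - g i)) (v i - g i) (Icc 0 1) 0 := by
          simpa using (((hasDerivAt_id (0:ℝ)).mul_const (v i - g i)).const_add (g i)).hasDerivWithinAt
        have hφc : HasDerivWithinAt (fun t : ℝ => φ (g i + t * (v i - g i)))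
            (φ' (g i) * (v i - g i)) (Icc 0 1) 0 := by
          have hcomp := HasDerivWithinAt.comp (0:ℝ)
            (hd (g i + (0:ℝ) * (v i - g i)) (hmem 0 ⟨le_refl 0, zero_le_one⟩ i)) hc
            (fun t ht => hmem t ht i)
          have hgi0 : g i + (0:ℝ) * (v i - g i) = g i := by ring
          rw [hgi0] at hcomp
          exact hcomp
        have := (hφc.sub_const (φ (f i))).sub ((hc.sub_const (f i)).const_mul (φ' (f i)))
        exact this
      have heq : (∑ i, (φ' (g i) - φ' (f i)) * (v i - g i))
          = ∑ i, (φ' (g i) * (v i - g i) - φ' (f i) * (v i - g i)) :=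
        Finset.sum_congr rfl fun i _ => by ring
      rw [heq, hh, hD]
      exact hsum
    -- positivity of the one-sided derivative
    have hslope : Tendsto (slope h 0) (𝓝[Icc (0:ℝ) 1 \ {0}] 0)
        (𝓝 (∑ i, (φ' (g i) - φ' (f i)) * (v i - g i))) :=
      (hasDerivWithinAt_iff_tendsto_slope).1 hDeriv
    rw [Icc_diff_left] at hslope
    have hne : (𝓝[Ioc (0:ℝ) 1] 0).NeBot := by
      apply mem_closure_iff_nhdsWithin_neBot.1
      rw [closure_Ioc (by norm_num : (0:ℝ) ≠ 1)]
      exact ⟨le_refl 0, by norm_num⟩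
    apply ge_of_tendsto hslope
    apply Filter.eventually_of_mem self_mem_nhdsWithin
    intro t ht
    have h0le : h 0 ≤ h t := hmono t (Ioc_subset_Icc_self ht)
    have : slope h 0 t = (h t - h 0) / t := by
      rw [slope_def_field]; ring_nf
    rw [this]
    exact div_nonneg (by linarith) ht.1.le
  -- combine
  have hkey : ∀ i, s (v i) (f i) - s (v i) (g i)
      = (φ (g i) - φ (f i) - φ' (f i) * (g i - f i)) + (φ' (g i) - φ' (f i)) * (v i - g i) := by
    intro i
    rw [hsIcc (v i) (hv01i i) (f i) (hfc i), hsIcc (v i) (hv01i i) (g i) (hg01 i)]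
    ring
  have hsum : (0:ℝ) < ∑ i, (s (v i) (f i) - s (v i) (g i)) := by
    calc (0:ℝ) < D g + ∑ i, (φ' (g i) - φ' (f i)) * (v i - g i) := by linarith
    _ = ∑ i, ((φ (g i) - φ (f i) - φ' (f i) * (g i - f i))
          + (φ' (g i) - φ' (f i)) * (v i - g i)) := by
        rw [hD, Finset.sum_add_distrib]
    _ = _ := Finset.sum_congr rfl fun i _ => (hkey i).symm
  rw [← sub_pos, ← Finset.sum_sub_distrib]
  exact hsum
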